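/- Let n ≥ 1 and L, L' ≥ 0 be integers, set q = L' − L, and let P ∈ ℂ[w₁,…,wₙ,v₁,…,vₙ] be bihomogeneous of bidegree (L,L') and harmonic (ΔP = 0). For a real-differentiable function f : ℂⁿ → ℂ define the Wirtinger derivatives ∂_α f(w) = (1/2)(Df(w)[e_α] − i·Df(w)[i·e_α]) and ∂̄_α f(w) = (1/2)(Df(w)[e_α] + i·Df(w)[i·e_α]), where Df(w) is the real Fréchet derivative and e_α is the α-th standard basis vector. On ℂⁿ ∖ {0}, with X(w) = ‖w‖² = ∑_α w_α·conj(w_α), define the gauged derivatives D_α f = ∂_α f + (q/2)·(conj(w_α)/X)·f and D̄_α f = ∂̄_α f − (q/2)·(w_α/X)·f, and the Bochner Laplacian Ĥ_q f = −(X/2)·∑_{α=1}^n (D_α(D̄_α f) + D̄_α(D_α f)). Then the function Ψ(w) = X(w)^{−(L+L')/2} · P(w, conj(w)) satisfies Ĥ_q Ψ = [L·L' + (n−1)·(L+L')/2]·Ψ on ℂⁿ ∖ {0}. (This is the monopole-harmonic spectrum E(n,L,L') = LL' + (n−1)(L+L')/2 of the paper, for the ℂP monopole of charge q.) -/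

import Mathlib

open MvPolynomial Complex

noncomputable section

/-- Weight function giving the degree in the `w`-variables (indexed by `Sum.inl`). -/
def wWt (n : ℕ) : (Fin n ⊕ Fin n) → ℕ := Sum.elim (fun _ => 1) (fun _ => 0)

/-- Weight function giving the degree in the `v`-variables (indexed by `Sum.inr`). -/
def vWt (n : ℕ) : (Fin n ⊕ Fin n) → ℕ := Sum.elim (fun _ => 0) (fun _ => 1)

/-- The complex Laplacian `Δ = ∑_α ∂²/∂w_α∂v_α` on polynomials. -/
def polyLap (n : ℕ) (P : MvPolynomial (Fin n ⊕ Fin n) ℂ) : MvPolynomial (Fin n ⊕ Fin n) ℂ :=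
  ∑ α : Fin n, pderiv (Sum.inl α) (pderiv (Sum.inr α) P)

/-- `X(w) = ∑_α w_α·conj(w_α) = ‖w‖²` as a complex number. -/
def Xnorm (n : ℕ) (w : Fin n → ℂ) : ℂ := ∑ α : Fin n, w α * (starRingEnd ℂ) (w α)

/-- The holomorphic Wirtinger derivative `∂_α f = (1/2)(Df[e_α] − i·Df[i·e_α])`. -/
def wirt (n : ℕ) (α : Fin n) (f : (Fin n → ℂ) → ℂ) (w : Fin n → ℂ) : ℂ :=
  (1 / 2) * (fderiv ℝ f w (Pi.single α 1) - I * fderiv ℝ f w ((I • (Pi.single α 1 : Fin n → ℂ))))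

/-- The antiholomorphic Wirtinger derivative `∂̄_α f = (1/2)(Df[e_α] + i·Df[i·e_α])`. -/
def wirtBar (n : ℕ) (α : Fin n) (f : (Fin n → ℂ) → ℂ) (w : Fin n → ℂ) : ℂ :=
  (1 / 2) * (fderiv ℝ f w (Pi.single α 1) + I * fderiv ℝ f w ((I • (Pi.single α 1 : Fin n → ℂ))))

/-- Gauged derivative `D_α f = ∂_α f + (q/2)·(conj(w_α)/X)·f`. -/
def covD (n : ℕ) (q : ℤ) (α : Fin n) (f : (Fin n → ℂ) → ℂ) : (Fin n → ℂ) → ℂ :=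
  fun w => wirt n α f w + ((q : ℂ) / 2) * ((starRingEnd ℂ) (w α) / Xnorm n w) * f w

/-- Gauged derivative `D̄_α f = ∂̄_α f − (q/2)·(w_α/X)·f`. -/
def covDBar (n : ℕ) (q : ℤ) (α : Fin n) (f : (Fin n → ℂ) → ℂ) : (Fin n → ℂ) → ℂ :=
  fun w => wirtBar n α f w - ((q : ℂ) / 2) * (w α / Xnorm n w) * f w

/-- The Bochner Laplacian `Ĥ_q f = −(X/2)·∑_α (D_α D̄_α + D̄_α D_α) f`. -/
def bochner (n : ℕ) (q : ℤ) (f : (Fin n → ℂ) → ℂ) (w : Fin n → ℂ) : ℂ :=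
  -(Xnorm n w / 2) *
    ∑ α : Fin n, (covD n q α (covDBar n q α f) w + covDBar n q α (covD n q α f) w)

/-- The monopole harmonic `Ψ(w) = X(w)^{−(L+L')/2} · P(w, conj w)`. -/
def monoPsi (n L L' : ℕ) (P : MvPolynomial (Fin n ⊕ Fin n) ℂ) (w : Fin n → ℂ) : ℂ :=
  (Xnorm n w) ^ (-(((L + L' : ℕ) : ℂ)) / 2) *
    MvPolynomial.eval (Sum.elim w (fun α => (starRingEnd ℂ) (w α))) P

lemma pderiv_comm' {σ : Type*} {R : Type*} [CommRing R] (i j : σ) (p : MvPolynomial σ R) :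
    pderiv i (pderiv j p) = pderiv j (pderiv i p) := by
  classical
  induction p using MvPolynomial.induction_on' with
  | add p q hp hq => simp [hp, hq]
  | monomial u a =>
      simp only [pderiv_monomial]
      rcases eq_or_ne i j with rfl | hij
      · rfl
      · congr 1
        · rw [tsub_tsub, tsub_tsub, add_comm]
        · simp only [Finsupp.tsub_apply, Finsupp.single_eq_of_ne hij,
            Finsupp.single_eq_of_ne (Ne.symm hij), Nat.sub_zero]
          ring

lemma X_mul_pderiv_monomial {σ : Type*} [DecidableEq σ] (i : σ) (u : σ →₀ ℕ) (a : ℂ) :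
    X i * pderiv i (monomial u a) = monomial u (u i * a) := by
  rw [pderiv_monomial]
  rcases Nat.eq_zero_or_pos (u i) with h | h
  · simp [h]
  · rw [X, monomial_mul, one_mul, add_tsub_cancel_of_le (Finsupp.single_le_iff.2 h), mul_comm]

lemma euler_aux {σ : Type*} [Fintype σ] [DecidableEq σ] (wt : σ → ℕ)
    (P : MvPolynomial σ ℂ) (m : ℕ) (h : P.IsWeightedHomogeneous wt m) :
    ∑ i : σ, wt i • (X i * pderiv i P) = m • P := by
  conv_lhs => rw [P.as_sum]
  conv_rhs => rw [P.as_sum]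
  simp only [map_sum, Finset.mul_sum, Finset.smul_sum]
  rw [Finset.sum_comm]
  refine Finset.sum_congr rfl fun u hu => ?_
  have hdeg : (Finsupp.weight wt u : ℕ) = m := h (MvPolynomial.mem_support_iff.mp hu)
  calc ∑ i : σ, wt i • (X i * pderiv i (monomial u (coeff u P)))
      = ∑ i : σ, monomial u (((u i * wt i : ℕ) : ℂ) * coeff u P) := by
        refine Finset.sum_congr rfl fun i _ => ?_
        rw [_root_.X_mul_pderiv_monomial, smul_monomial]
        congr 1
        push_cast [smul_eq_mul]
        ring
    _ = monomial u (((∑ i : σ, u i * wt i : ℕ) : ℂ) * coeff u P) := by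
        push_cast
        rw [← map_sum, ← Finset.sum_mul]
    _ = m • monomial u (coeff u P) := by
        have : (∑ i : σ, u i * wt i) = m := by
          rw [← hdeg, Finsupp.weight_apply, Finsupp.sum_fintype]
          · simp [smul_eq_mul]
          · intro i; simp
        rw [this, smul_monomial, nsmul_eq_mul]

lemma euler_l {n L : ℕ} {P : MvPolynomial (Fin n ⊕ Fin n) ℂ}
    (hw : P.IsWeightedHomogeneous (wWt n) L) :
    ∑ α : Fin n, X (Sum.inl α) * pderiv (Sum.inl α) P = C (L : ℂ) * P := by
  have h := euler_aux (wWt n) P L hw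
  rw [Fintype.sum_sum_type] at h
  simp only [wWt, Sum.elim_inl, Sum.elim_inr, one_smul, zero_smul,
    Finset.sum_const_zero, add_zero] at h
  rw [h, nsmul_eq_mul, ← map_natCast (C : ℂ →+* MvPolynomial (Fin n ⊕ Fin n) ℂ)]

lemma euler_r {n L' : ℕ} {P : MvPolynomial (Fin n ⊕ Fin n) ℂ}
    (hv : P.IsWeightedHomogeneous (vWt n) L') :
    ∑ α : Fin n, X (Sum.inr α) * pderiv (Sum.inr α) P = C (L' : ℂ) * P := by
  have h := euler_aux (vWt n) P L' hv
  rw [Fintype.sum_sum_type] at h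
  simp only [vWt, Sum.elim_inl, Sum.elim_inr, one_smul, zero_smul,
    Finset.sum_const_zero, zero_add] at h
  rw [h, nsmul_eq_mul, ← map_natCast (C : ℂ →+* MvPolynomial (Fin n ⊕ Fin n) ℂ)]

def Xp (n : ℕ) : MvPolynomial (Fin n ⊕ Fin n) ℂ := ∑ α : Fin n, X (Sum.inl α) * X (Sum.inr α)

lemma pderiv_inl_Xp {n : ℕ} (α : Fin n) : pderiv (Sum.inl α) (Xp n) = X (Sum.inr α) := by
  classical
  simp [Xp, pderiv_mul, Pi.single_apply, Finset.sum_ite_eq', ite_mul, mul_ite]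

lemma pderiv_inr_Xp {n : ℕ} (α : Fin n) : pderiv (Sum.inr α) (Xp n) = X (Sum.inl α) := by
  classical
  simp [Xp, pderiv_mul, Pi.single_apply, Finset.sum_ite_eq', ite_mul, mul_ite]

def Q1 (n L' : ℕ) (P : MvPolynomial (Fin n ⊕ Fin n) ℂ) (α : Fin n) : MvPolynomial (Fin n ⊕ Fin n) ℂ :=
  C (-(L' : ℂ)) * (X (Sum.inl α) * P) + Xp n * pderiv (Sum.inr α) P
def Q1' (n L : ℕ) (P : MvPolynomial (Fin n ⊕ Fin n) ℂ) (α : Fin n) : MvPolynomial (Fin n ⊕ Fin n) ℂ :=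
  C (-(L : ℂ)) * (X (Sum.inr α) * P) + Xp n * pderiv (Sum.inl α) P

lemma polyKey (n L L' : ℕ) (P : MvPolynomial (Fin n ⊕ Fin n) ℂ)
    (hw : P.IsWeightedHomogeneous (wWt n) L)
    (hv : P.IsWeightedHomogeneous (vWt n) L')
    (hharm : polyLap n P = 0) :
    ∑ α : Fin n,
      ((C (-(L:ℂ)-1) * (X (Sum.inr α) * Q1 n L' P α) + Xp n * pderiv (Sum.inl α) (Q1 n L' P α)) +
       (C (-(L':ℂ)-1) * (X (Sum.inl α) * Q1' n L P α) + Xp n * pderiv (Sum.inr α) (Q1' n L P α)))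
    = C (-(2*(L:ℂ)*(L':ℂ) + ((n:ℂ)-1)*((L:ℂ)+(L':ℂ)))) * (Xp n * P) := by
  classical
  have e1 := euler_l hw
  have e2 := euler_r hv
  have e3 : ∑ α : Fin n, pderiv (Sum.inl α) (pderiv (Sum.inr α) P) = 0 := hharm
  have e3' : ∑ α : Fin n, pderiv (Sum.inr α) (pderiv (Sum.inl α) P) = 0 := by
    rw [← e3]; exact Finset.sum_congr rfl fun α _ => pderiv_comm' _ _ _
  have hXp : ∑ α : Fin n, X (Sum.inl α) * X (Sum.inr α) = Xp n := rfl
  have key : ∀ α : Fin n,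
      ((C (-(L:ℂ)-1) * (X (Sum.inr α) * Q1 n L' P α) + Xp n * pderiv (Sum.inl α) (Q1 n L' P α)) +
       (C (-(L':ℂ)-1) * (X (Sum.inl α) * Q1' n L P α) + Xp n * pderiv (Sum.inr α) (Q1' n L P α)))
      = ((2*(L:MvPolynomial (Fin n ⊕ Fin n) ℂ)*(L':MvPolynomial (Fin n ⊕ Fin n) ℂ)
            +(L:MvPolynomial (Fin n ⊕ Fin n) ℂ)+(L':MvPolynomial (Fin n ⊕ Fin n) ℂ)) * P)
            * (X (Sum.inl α) * X (Sum.inr α))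
        + ((-2*(L:MvPolynomial (Fin n ⊕ Fin n) ℂ)) * Xp n) * (X (Sum.inr α) * pderiv (Sum.inr α) P)
        + ((-2*(L':MvPolynomial (Fin n ⊕ Fin n) ℂ)) * Xp n) * (X (Sum.inl α) * pderiv (Sum.inl α) P)
        + ((-(L:MvPolynomial (Fin n ⊕ Fin n) ℂ)-(L':MvPolynomial (Fin n ⊕ Fin n) ℂ)) * (Xp n * P))
        + (Xp n * Xp n) * pderiv (Sum.inl α) (pderiv (Sum.inr α) P)
        + (Xp n * Xp n) * pderiv (Sum.inr α) (pderiv (Sum.inl α) P) := by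
    intro α
    simp only [Q1, Q1', map_add, pderiv_C_mul, pderiv_mul, pderiv_inl_Xp, pderiv_inr_Xp,
      pderiv_X_self, pderiv_C, one_mul, zero_mul, mul_zero, add_zero, zero_add]
    simp only [smul_eq_C_mul, map_sub, map_neg, map_natCast, map_one, map_mul, map_ofNat]
    ring
  rw [Finset.sum_congr rfl (fun α _ => key α)]
  simp only [Finset.sum_add_distrib, ← Finset.mul_sum, Finset.sum_const, Finset.card_univ,
    Fintype.card_fin, hXp, e1, e2, e3, e3', mul_zero, smul_eq_C_mul, map_sub, map_neg,
    map_natCast, map_one, map_mul, map_add, map_ofNat, nsmul_eq_mul]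
  ring

variable {n : ℕ} {f g : (Fin n → ℂ) → ℂ} {w : Fin n → ℂ} {β : Fin n}

lemma wirt_add (hf : DifferentiableAt ℝ f w) (hg : DifferentiableAt ℝ g w) :
    wirt n β (fun x => f x + g x) w = wirt n β f w + wirt n β g w := by
  unfold wirt; rw [fderiv_fun_add hf hg]; simp; ring

lemma wirtBar_add (hf : DifferentiableAt ℝ f w) (hg : DifferentiableAt ℝ g w) :
    wirtBar n β (fun x => f x + g x) w = wirtBar n β f w + wirtBar n β g w := by
  unfold wirtBar; rw [fderiv_fun_add hf hg]; simp; ring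

lemma wirt_mul (hf : DifferentiableAt ℝ f w) (hg : DifferentiableAt ℝ g w) :
    wirt n β (fun x => f x * g x) w = wirt n β f w * g w + f w * wirt n β g w := by
  unfold wirt; rw [fderiv_fun_mul hf hg]; simp [smul_eq_mul]; ring

lemma wirtBar_mul (hf : DifferentiableAt ℝ f w) (hg : DifferentiableAt ℝ g w) :
    wirtBar n β (fun x => f x * g x) w = wirtBar n β f w * g w + f w * wirtBar n β g w := by
  unfold wirtBar; rw [fderiv_fun_mul hf hg]; simp [smul_eq_mul]; ring

lemma wirt_const (a : ℂ) : wirt n β (fun _ => a) w = 0 := by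
  unfold wirt; rw [fderiv_fun_const]; simp

lemma wirtBar_const (a : ℂ) : wirtBar n β (fun _ => a) w = 0 := by
  unfold wirtBar; rw [fderiv_fun_const]; simp

lemma hasFDerivAt_proj (α : Fin n) (w : Fin n → ℂ) :
    HasFDerivAt (fun x : Fin n → ℂ => x α)
      (ContinuousLinearMap.proj (R := ℝ) (φ := fun _ : Fin n => ℂ) α) w := by
  exact (ContinuousLinearMap.proj (R := ℝ) (φ := fun _ : Fin n => ℂ) α).hasFDerivAt

lemma hasFDerivAt_conjProj (α : Fin n) (w : Fin n → ℂ) :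
    HasFDerivAt (fun x : Fin n → ℂ => (starRingEnd ℂ) (x α))
      ((Complex.conjCLE.toContinuousLinearMap).comp
        (ContinuousLinearMap.proj (R := ℝ) (φ := fun _ : Fin n => ℂ) α)) w := by
  exact ((Complex.conjCLE.toContinuousLinearMap).comp
    (ContinuousLinearMap.proj (R := ℝ) (φ := fun _ : Fin n => ℂ) α)).hasFDerivAt

lemma wirt_proj (α : Fin n) : wirt n β (fun x => x α) w = if α = β then 1 else 0 := by
  unfold wirt
  rw [(hasFDerivAt_proj α w).fderiv]
  simp only [ContinuousLinearMap.proj_apply, Pi.smul_apply, Pi.single_apply, smul_eq_mul]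
  split_ifs <;> simp <;> ring_nf <;> simp [Complex.I_sq]

lemma wirtBar_proj (α : Fin n) : wirtBar n β (fun x => x α) w = 0 := by
  unfold wirtBar
  rw [(hasFDerivAt_proj α w).fderiv]
  simp only [ContinuousLinearMap.proj_apply, Pi.smul_apply, Pi.single_apply, smul_eq_mul]
  split_ifs <;> simp <;> ring_nf <;> simp [Complex.I_sq]

lemma wirt_conjProj (α : Fin n) : wirt n β (fun x => (starRingEnd ℂ) (x α)) w = 0 := by
  unfold wirt
  rw [(hasFDerivAt_conjProj α w).fderiv]
  simp only [ContinuousLinearMap.comp_apply, ContinuousLinearMap.proj_apply,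
    ContinuousLinearEquiv.coe_coe, Complex.conjCLE_apply, Pi.smul_apply, Pi.single_apply,
    smul_eq_mul, map_mul, Complex.conj_I]
  split_ifs <;> simp <;> ring_nf <;> simp [Complex.I_sq]

lemma wirtBar_conjProj (α : Fin n) :
    wirtBar n β (fun x => (starRingEnd ℂ) (x α)) w = if α = β then 1 else 0 := by
  unfold wirtBar
  rw [(hasFDerivAt_conjProj α w).fderiv]
  simp only [ContinuousLinearMap.comp_apply, ContinuousLinearMap.proj_apply,
    ContinuousLinearEquiv.coe_coe, Complex.conjCLE_apply, Pi.smul_apply, Pi.single_apply,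
    smul_eq_mul, map_mul, Complex.conj_I]
  split_ifs <;> simp <;> ring_nf <;> simp [Complex.I_sq]

lemma wirt_comp {d : ℂ} {h : ℂ → ℂ} (hf : DifferentiableAt ℝ f w)
    (hh : HasDerivAt h d (f w)) :
    wirt n β (fun x => h (f x)) w = d * wirt n β f w := by
  have hc : HasFDerivAt (h ∘ f) (d • fderiv ℝ f w) w :=
    hh.comp_hasFDerivAt w hf.hasFDerivAt
  unfold wirt
  rw [show (fun x => h (f x)) = h ∘ f from rfl, hc.fderiv]
  simp only [ContinuousLinearMap.smul_apply, smul_eq_mul]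
  ring

lemma wirtBar_comp {d : ℂ} {h : ℂ → ℂ} (hf : DifferentiableAt ℝ f w)
    (hh : HasDerivAt h d (f w)) :
    wirtBar n β (fun x => h (f x)) w = d * wirtBar n β f w := by
  have hc : HasFDerivAt (h ∘ f) (d • fderiv ℝ f w) w :=
    hh.comp_hasFDerivAt w hf.hasFDerivAt
  unfold wirtBar
  rw [show (fun x => h (f x)) = h ∘ f from rfl, hc.fderiv]
  simp only [ContinuousLinearMap.smul_apply, smul_eq_mul]
  ring

lemma wirt_congr (h : f =ᶠ[nhds w] g) : wirt n β f w = wirt n β g w := by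
  unfold wirt; rw [h.fderiv_eq]

lemma wirtBar_congr (h : f =ᶠ[nhds w] g) : wirtBar n β f w = wirtBar n β g w := by
  unfold wirtBar; rw [h.fderiv_eq]

def Fp (n : ℕ) (Q : MvPolynomial (Fin n ⊕ Fin n) ℂ) : (Fin n → ℂ) → ℂ :=
  fun w => eval (Sum.elim w fun α => (starRingEnd ℂ) (w α)) Q

lemma Fp_master (Q : MvPolynomial (Fin n ⊕ Fin n) ℂ) :
    DifferentiableAt ℝ (Fp n Q) w ∧
    (∀ β, wirt n β (Fp n Q) w = Fp n (pderiv (Sum.inl β) Q) w) ∧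
    (∀ β, wirtBar n β (Fp n Q) w = Fp n (pderiv (Sum.inr β) Q) w) := by
  classical
  induction Q using MvPolynomial.induction_on with
  | C a =>
      have e : Fp n (C a) = fun _ : Fin n → ℂ => a := by funext x; simp [Fp]
      refine ⟨?_, ?_, ?_⟩
      · rw [e]; exact differentiableAt_const a
      · intro β; rw [e, wirt_const]; simp [Fp, pderiv_C]
      · intro β; rw [e, wirtBar_const]; simp [Fp, pderiv_C]
  | add p r hp hr =>
      obtain ⟨hdp, hp1, hp2⟩ := hp
      obtain ⟨hdr, hr1, hr2⟩ := hr
      have e : Fp n (p + r) = fun x => Fp n p x + Fp n r x := by funext x; simp [Fp]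
      refine ⟨?_, ?_, ?_⟩
      · rw [e]; exact hdp.add hdr
      · intro β; rw [e, wirt_add hdp hdr, hp1 β, hr1 β]; simp [Fp]
      · intro β; rw [e, wirtBar_add hdp hdr, hp2 β, hr2 β]; simp [Fp]
  | mul_X p i hp =>
      obtain ⟨hdp, hp1, hp2⟩ := hp
      rcases i with α | α
      · have e : Fp n (p * X (Sum.inl α)) = fun x => Fp n p x * x α := by
          funext x; simp [Fp]
        have hdx : DifferentiableAt ℝ (fun x : Fin n → ℂ => x α) w :=
          (hasFDerivAt_proj α w).differentiableAt
        refine ⟨?_, ?_, ?_⟩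
        · rw [e]; exact hdp.mul hdx
        · intro β
          rw [e, wirt_mul hdp hdx, wirt_proj α, hp1 β]
          simp only [Fp, pderiv_mul, pderiv_X, map_add, map_mul, eval_X, Sum.elim_inl,
            Pi.single_apply, Sum.inl.injEq, apply_ite, map_one, map_zero, mul_ite, mul_one,
            mul_zero]
          split_ifs <;> ring
        · intro β
          rw [e, wirtBar_mul hdp hdx, wirtBar_proj α, hp2 β]
          simp only [Fp, pderiv_mul, pderiv_X, map_add, map_mul, eval_X, Sum.elim_inl,
            Pi.single_apply, apply_ite, map_one, map_zero, mul_ite, mul_one, mul_zero]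
          split_ifs <;> simp_all <;> ring
      · have e : Fp n (p * X (Sum.inr α)) = fun x => Fp n p x * (starRingEnd ℂ) (x α) := by
          funext x; simp [Fp]
        have hdx : DifferentiableAt ℝ (fun x : Fin n → ℂ => (starRingEnd ℂ) (x α)) w :=
          (hasFDerivAt_conjProj α w).differentiableAt
        refine ⟨?_, ?_, ?_⟩
        · rw [e]; exact hdp.mul hdx
        · intro β
          rw [e, wirt_mul hdp hdx, wirt_conjProj α, hp1 β]
          simp only [Fp, pderiv_mul, pderiv_X, map_add, map_mul, eval_X, Sum.elim_inr,
            Pi.single_apply, apply_ite, map_one, map_zero, mul_ite, mul_one, mul_zero]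
          split_ifs <;> simp_all <;> ring
        · intro β
          rw [e, wirtBar_mul hdp hdx, wirtBar_conjProj α, hp2 β]
          simp only [Fp, pderiv_mul, pderiv_X, map_add, map_mul, eval_X, Sum.elim_inr,
            Pi.single_apply, Sum.inr.injEq, apply_ite, map_one, map_zero, mul_ite, mul_one,
            mul_zero]
          split_ifs <;> ring

lemma pderiv_inl_Xp' (α : Fin n) : pderiv (Sum.inl α) (Xp n) = X (Sum.inr α) := by
  classical
  simp [Xp, pderiv_mul, Pi.single_apply, Finset.sum_ite_eq', ite_mul, mul_ite]

lemma pderiv_inr_Xp' (α : Fin n) : pderiv (Sum.inr α) (Xp n) = X (Sum.inl α) := by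
  classical
  simp [Xp, pderiv_mul, Pi.single_apply, Finset.sum_ite_eq', ite_mul, mul_ite]

lemma Xnorm_funeq : Xnorm n = Fp n (Xp n) := by
  funext x; simp [Xnorm, Fp, Xp, map_sum]

lemma Xnorm_diff : DifferentiableAt ℝ (Xnorm n) w := by
  rw [Xnorm_funeq]; exact (Fp_master (Xp n)).1

lemma Xnorm_wirt : wirt n β (Xnorm n) w = (starRingEnd ℂ) (w β) := by
  rw [Xnorm_funeq, (Fp_master (Xp n)).2.1 β, pderiv_inl_Xp']; simp [Fp]

lemma Xnorm_wirtBar : wirtBar n β (Xnorm n) w = w β := by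
  rw [Xnorm_funeq, (Fp_master (Xp n)).2.2 β, pderiv_inr_Xp']; simp [Fp]

lemma Xnorm_re_pos (hw : w ≠ 0) : 0 < (Xnorm n w).re := by
  have e : Xnorm n w = ((∑ α, Complex.normSq (w α) : ℝ) : ℂ) := by
    simp [Xnorm, Complex.mul_conj]
  rw [e, Complex.ofReal_re]
  obtain ⟨α, hα⟩ := Function.ne_iff.mp hw
  exact Finset.sum_pos' (fun i _ => Complex.normSq_nonneg _)
    ⟨α, Finset.mem_univ α, Complex.normSq_pos.2 (by simpa using hα)⟩

lemma Xnorm_ne_zero (hw : w ≠ 0) : Xnorm n w ≠ 0 := by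
  intro h
  have := Xnorm_re_pos (n := n) hw
  rw [h] at this; simp at this

lemma Xnorm_slit (hw : w ≠ 0) : Xnorm n w ∈ Complex.slitPlane :=
  Complex.mem_slitPlane_iff.2 (Or.inl (Xnorm_re_pos hw))

lemma cpow_hasDerivAt (c : ℂ) (hw : w ≠ 0) :
    HasDerivAt (fun z : ℂ => z ^ c) (c * Xnorm n w ^ (c - 1)) (Xnorm n w) :=
  (Complex.hasStrictDerivAt_cpow_const (Xnorm_slit hw)).hasDerivAt

lemma cpow_diff (c : ℂ) (hw : w ≠ 0) :
    DifferentiableAt ℝ (fun x => Xnorm n x ^ c) w :=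
  ((cpow_hasDerivAt c hw).comp_hasFDerivAt w Xnorm_diff.hasFDerivAt).differentiableAt

lemma cpow_wirt (c : ℂ) (hw : w ≠ 0) :
    wirt n β (fun x => Xnorm n x ^ c) w
      = c * Xnorm n w ^ (c - 1) * (starRingEnd ℂ) (w β) := by
  have h := wirt_comp (β := β) Xnorm_diff (cpow_hasDerivAt c hw)
  rw [Xnorm_wirt] at h
  exact h

lemma cpow_wirtBar (c : ℂ) (hw : w ≠ 0) :
    wirtBar n β (fun x => Xnorm n x ^ c) w = c * Xnorm n w ^ (c - 1) * w β := by
  have h := wirtBar_comp (β := β) Xnorm_diff (cpow_hasDerivAt c hw)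
  rw [Xnorm_wirtBar] at h
  exact h

def PhiF (n : ℕ) (c : ℂ) (Q : MvPolynomial (Fin n ⊕ Fin n) ℂ) : (Fin n → ℂ) → ℂ :=
  fun w => Xnorm n w ^ c * Fp n Q w

lemma PhiF_diff (c : ℂ) (Q : MvPolynomial (Fin n ⊕ Fin n) ℂ) (hw : w ≠ 0) :
    DifferentiableAt ℝ (PhiF n c Q) w :=
  (cpow_diff c hw).mul (Fp_master Q).1

lemma PhiF_wirt (c : ℂ) (Q : MvPolynomial (Fin n ⊕ Fin n) ℂ) (β : Fin n) (hw : w ≠ 0) :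
    wirt n β (PhiF n c Q) w
      = c * Xnorm n w ^ (c - 1) * (starRingEnd ℂ) (w β) * Fp n Q w
        + Xnorm n w ^ c * Fp n (pderiv (Sum.inl β) Q) w := by
  rw [show PhiF n c Q = (fun x => Xnorm n x ^ c * Fp n Q x) from rfl,
    wirt_mul (cpow_diff c hw) (Fp_master Q).1, cpow_wirt c hw, (Fp_master Q).2.1 β]

lemma PhiF_wirtBar (c : ℂ) (Q : MvPolynomial (Fin n ⊕ Fin n) ℂ) (β : Fin n) (hw : w ≠ 0) :
    wirtBar n β (PhiF n c Q) w
      = c * Xnorm n w ^ (c - 1) * w β * Fp n Q w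
        + Xnorm n w ^ c * Fp n (pderiv (Sum.inr β) Q) w := by
  rw [show PhiF n c Q = (fun x => Xnorm n x ^ c * Fp n Q x) from rfl,
    wirtBar_mul (cpow_diff c hw) (Fp_master Q).1, cpow_wirtBar c hw, (Fp_master Q).2.2 β]

lemma covD_PhiF (qq : ℤ) (c : ℂ) (Q : MvPolynomial (Fin n ⊕ Fin n) ℂ) (α : Fin n)
    (hw : w ≠ 0) :
    covD n qq α (PhiF n c Q) w
      = PhiF n (c - 1)
          (C (c + (qq : ℂ)/2) * (X (Sum.inr α) * Q) + Xp n * pderiv (Sum.inl α) Q) w := by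
  have hX := Xnorm_ne_zero (n := n) hw
  have hpow : Xnorm n w ^ c = Xnorm n w ^ (c - 1) * Xnorm n w := by
    conv_lhs => rw [show c = c - 1 + 1 by ring]
    rw [Complex.cpow_add _ _ hX, Complex.cpow_one]
  have hXe : eval (Sum.elim w fun α => (starRingEnd ℂ) (w α)) (Xp n) = Xnorm n w :=
    (congrFun Xnorm_funeq w).symm
  unfold covD
  rw [PhiF_wirt c Q α hw]
  show _ = Xnorm n w ^ (c - 1) * Fp n _ w
  simp only [Fp, map_add, map_mul, eval_C, eval_X, Sum.elim_inr, Sum.elim_inl, hXe]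
  rw [show PhiF n c Q w = Xnorm n w ^ c * Fp n Q w from rfl, hpow]
  simp only [Fp]
  field_simp
  ring

lemma covDBar_PhiF (qq : ℤ) (c : ℂ) (Q : MvPolynomial (Fin n ⊕ Fin n) ℂ) (α : Fin n)
    (hw : w ≠ 0) :
    covDBar n qq α (PhiF n c Q) w
      = PhiF n (c - 1)
          (C (c - (qq : ℂ)/2) * (X (Sum.inl α) * Q) + Xp n * pderiv (Sum.inr α) Q) w := by
  have hX := Xnorm_ne_zero (n := n) hw
  have hpow : Xnorm n w ^ c = Xnorm n w ^ (c - 1) * Xnorm n w := by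
    conv_lhs => rw [show c = c - 1 + 1 by ring]
    rw [Complex.cpow_add _ _ hX, Complex.cpow_one]
  have hXe : eval (Sum.elim w fun α => (starRingEnd ℂ) (w α)) (Xp n) = Xnorm n w :=
    (congrFun Xnorm_funeq w).symm
  unfold covDBar
  rw [PhiF_wirtBar c Q α hw]
  show _ = Xnorm n w ^ (c - 1) * Fp n _ w
  simp only [Fp, map_add, map_mul, eval_C, eval_X, Sum.elim_inr, Sum.elim_inl, hXe]
  rw [show PhiF n c Q w = Xnorm n w ^ c * Fp n Q w from rfl, hpow]
  simp only [Fp]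
  field_simp
  ring

lemma covD_congr {qq : ℤ} {α : Fin n} (h : f =ᶠ[nhds w] g) :
    covD n qq α f w = covD n qq α g w := by
  unfold covD; rw [wirt_congr h, h.eq_of_nhds]

lemma covDBar_congr {qq : ℤ} {α : Fin n} (h : f =ᶠ[nhds w] g) :
    covDBar n qq α f w = covDBar n qq α g w := by
  unfold covDBar; rw [wirtBar_congr h, h.eq_of_nhds]

lemma covDBar_PhiF_ev (qq : ℤ) (c : ℂ) (Q : MvPolynomial (Fin n ⊕ Fin n) ℂ) (α : Fin n)
    (hw : w ≠ 0) :
    covDBar n qq α (PhiF n c Q) =ᶠ[nhds w]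
      PhiF n (c - 1) (C (c - (qq : ℂ)/2) * (X (Sum.inl α) * Q) + Xp n * pderiv (Sum.inr α) Q) :=
  Filter.eventuallyEq_of_mem (isOpen_compl_singleton.mem_nhds (by simpa using hw))
    (fun x hx => covDBar_PhiF qq c Q α (by simpa using hx))

lemma covD_PhiF_ev (qq : ℤ) (c : ℂ) (Q : MvPolynomial (Fin n ⊕ Fin n) ℂ) (α : Fin n)
    (hw : w ≠ 0) :
    covD n qq α (PhiF n c Q) =ᶠ[nhds w]
      PhiF n (c - 1) (C (c + (qq : ℂ)/2) * (X (Sum.inr α) * Q) + Xp n * pderiv (Sum.inl α) Q) :=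
  Filter.eventuallyEq_of_mem (isOpen_compl_singleton.mem_nhds (by simpa using hw))
    (fun x hx => covD_PhiF qq c Q α (by simpa using hx))

/-- For `P` bihomogeneous of bidegree `(L,L')` and harmonic, the monopole harmonic
`Ψ = X^{−(L+L')/2}·P(w, conj w)` is an eigenfunction of the Bochner Laplacian of
charge `q = L' − L` with eigenvalue `L·L' + (n−1)(L+L')/2`. -/
theorem stmt3 (n L L' : ℕ) (hn : 1 ≤ n) (q : ℤ) (hq : q = (L' : ℤ) - L)
    (P : MvPolynomial (Fin n ⊕ Fin n) ℂ)
    (hw : P.IsWeightedHomogeneous (wWt n) L)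
    (hv : P.IsWeightedHomogeneous (vWt n) L')
    (hharm : polyLap n P = 0) :
    ∀ w : Fin n → ℂ, w ≠ 0 →
      bochner n q (monoPsi n L L' P) w
        = ((L : ℂ) * (L' : ℂ) + ((n : ℂ) - 1) * ((L : ℂ) + (L' : ℂ)) / 2) *
            monoPsi n L L' P w := by
  intro w hw0
  have hX := Xnorm_ne_zero (n := n) hw0
  obtain ⟨c, hcdef⟩ : ∃ c : ℂ, c = -(((L + L' : ℕ) : ℂ)) / 2 := ⟨_, rfl⟩
  have hPsi : monoPsi n L L' P = PhiF n c P := by funext x; rw [hcdef]; rfl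
  have hq' : (q : ℂ) = (L' : ℂ) - (L : ℂ) := by rw [hq]; push_cast; ring
  have hcc : c = -((L : ℂ) + (L' : ℂ)) / 2 := by rw [hcdef]; push_cast; ring
  have h1 : c - (q : ℂ)/2 = -(L' : ℂ) := by rw [hcc, hq']; ring
  have h2 : c + (q : ℂ)/2 = -(L : ℂ) := by rw [hcc, hq']; ring
  have h3 : c - 1 + (q : ℂ)/2 = -(L : ℂ) - 1 := by rw [hcc, hq']; ring
  have h4 : c - 1 - (q : ℂ)/2 = -(L' : ℂ) - 1 := by rw [hcc, hq']; ring
  have step : ∀ α : Fin n,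
      covD n q α (covDBar n q α (monoPsi n L L' P)) w
        + covDBar n q α (covD n q α (monoPsi n L L' P)) w
      = Xnorm n w ^ (c - 2) *
          Fp n ((C (-(L:ℂ)-1) * (X (Sum.inr α) * Q1 n L' P α)
                  + Xp n * pderiv (Sum.inl α) (Q1 n L' P α)) +
                (C (-(L':ℂ)-1) * (X (Sum.inl α) * Q1' n L P α)
                  + Xp n * pderiv (Sum.inr α) (Q1' n L P α))) w := by
    intro α
    have e1 := covD_congr (n := n) (w := w) (qq := q) (α := α)
      (covDBar_PhiF_ev q c P α hw0)
    rw [covD_PhiF q (c-1) _ α hw0] at e1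
    rw [h1, h3, show c - 1 - 1 = c - 2 by ring] at e1
    have e2 := covDBar_congr (n := n) (w := w) (qq := q) (α := α)
      (covD_PhiF_ev q c P α hw0)
    rw [covDBar_PhiF q (c-1) _ α hw0] at e2
    rw [h2, h4, show c - 1 - 1 = c - 2 by ring] at e2
    rw [hPsi, e1, e2]
    simp only [PhiF, Q1, Q1', Fp, map_add]
    ring
  unfold bochner
  rw [Finset.sum_congr rfl (fun α _ => step α), ← Finset.mul_sum]
  simp only [Fp, ← map_sum]
  rw [polyKey n L L' P hw hv hharm]
  have hXe : eval (Sum.elim w fun α => (starRingEnd ℂ) (w α)) (Xp n) = Xnorm n w :=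
    (congrFun Xnorm_funeq w).symm
  simp only [map_mul, eval_C, hXe]
  rw [hPsi]
  have hpow2 : Xnorm n w ^ c = Xnorm n w ^ (c - 2) * Xnorm n w * Xnorm n w := by
    conv_lhs => rw [show c = c - 2 + 1 + 1 by ring]
    rw [Complex.cpow_add _ _ hX, Complex.cpow_add _ _ hX, Complex.cpow_one]
  simp only [PhiF, Fp, hpow2]
  ring
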